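/- For any loopless finite graph G with n vertices and any real number q < 0, the chromatic polynomial satisfies (-1)^n P_G(q) > 0. -/

import Mathlib

open Finset Polynomial

/-- Number of connected components (including isolated vertices) of the spanning
subgraph of the multigraph with vertex type `V`, edge type `E`, endpoint map `ends`,
keeping only the edges in `E'`. -/
noncomputable def kcomp {V E : Type*} (ends : E → V × V) (E' : Finset E) : ℕ :=
  Nat.card (Quotient (Relation.EqvGen.setoid (fun a b : V =>
    ∃ e ∈ E', ends e = (a, b) ∨ ends e = (b, a))))

/-- The chromatic polynomial, via the Fortuin–Kasteleyn / Whitney expansion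
`P_G(q) = ∑_{E' ⊆ E} (-1)^{|E'|} q^{k(E')}`. -/
noncomputable def chromPoly {V E : Type*} [Fintype E] (ends : E → V × V) : Polynomial ℤ :=
  ∑ E' : Finset E, (-1 : ℤ) ^ E'.card • (X : Polynomial ℤ) ^ kcomp ends E'

set_option linter.unusedVariables false
set_option linter.unusedSectionVars false
set_option maxHeartbeats 1000000

section Aux

variable {V E : Type*}

/-- The edge relation determined by the edge set `S`. -/
def erel (ends : E → V × V) (S : Finset E) (a b : V) : Prop :=
  ∃ e ∈ S, ends e = (a, b) ∨ ends e = (b, a)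

/-- Connectivity via edges in `S`. -/
def conn (ends : E → V × V) (S : Finset E) (a b : V) : Prop :=
  Relation.EqvGen (erel ends S) a b

variable {ends : E → V × V}

lemma kcomp_eq (S : Finset E) :
    kcomp ends S = Nat.card (Quotient (Relation.EqvGen.setoid (erel ends S))) := rfl

lemma conn.refl (S : Finset E) (a : V) : conn ends S a a := Relation.EqvGen.refl a

lemma conn.symm {S : Finset E} {a b : V} (h : conn ends S a b) : conn ends S b a :=
  Relation.EqvGen.symm _ _ h

lemma conn.trans {S : Finset E} {a b c : V} (h : conn ends S a b) (h' : conn ends S b c) :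
    conn ends S a c := Relation.EqvGen.trans _ _ _ h h'

lemma conn.mono {S T : Finset E} (hST : S ⊆ T) {a b : V} (h : conn ends S a b) :
    conn ends T a b :=
  Relation.EqvGen.mono (r := erel ends S) (p := erel ends T)
    ((fun a b ⟨e, he, h⟩ => ⟨e, hST he, h⟩ : ∀ a b, erel ends S a b → erel ends T a b)) a b h

lemma conn.single {S : Finset E} {e : E} (he : e ∈ S) :
    conn ends S (ends e).1 (ends e).2 :=
  Relation.EqvGen.rel _ _ ⟨e, he, Or.inl rfl⟩

/-- Substitution: if `a` and `b` are connected through `insert e S` and the endpoints of `e`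
are connected through `S`, then `a` and `b` are connected through `S`. -/
lemma conn_subst {S : Finset E} {e : E} {a b : V} [DecidableEq E]
    (h : conn ends (insert e S) a b)
    (he : conn ends S (ends e).1 (ends e).2) : conn ends S a b := by
  induction h with
  | rel x y hxy =>
    obtain ⟨f, hf, hor⟩ := hxy
    rcases Finset.mem_insert.1 hf with rfl | hfS
    · rcases hor with h1 | h1
      · rw [h1] at he; exact he
      · rw [h1] at he; exact he.symm
    · exact Relation.EqvGen.rel _ _ ⟨f, hfS, hor⟩
  | refl x => exact conn.refl _ _
  | symm x y _ ih => exact ih.symm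
  | trans x y z _ _ ih1 ih2 => exact ih1.trans ih2

lemma conn_empty {a b : V} (h : conn ends (∅ : Finset E) a b) : a = b := by
  induction h with
  | rel x y hxy => obtain ⟨f, hf, _⟩ := hxy; simp at hf
  | refl x => rfl
  | symm _ _ _ ih => exact ih.symm
  | trans _ _ _ _ _ ih1 ih2 => exact ih1.trans ih2

lemma kcomp_congr {S T : Finset E} (h : ∀ a b, conn ends S a b ↔ conn ends T a b) :
    kcomp ends S = kcomp ends T := by
  rw [kcomp_eq, kcomp_eq]
  congr 1
  exact congrArg _ (Setoid.ext h)

lemma kcomp_empty : kcomp (ends := ends) (∅ : Finset E) = Nat.card V := by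
  rw [kcomp_eq]
  refine (Nat.card_eq_of_bijective
    (Quotient.mk (Relation.EqvGen.setoid (erel ends (∅ : Finset E))))
    ⟨fun a b hab => ?_, fun x => Quotient.exists_rep x⟩).symm
  exact conn_empty (Quotient.eq''.1 hab)

lemma kcomp_insert_of_conn [DecidableEq E] {S : Finset E} {e : E}
    (h : conn ends S (ends e).1 (ends e).2) :
    kcomp ends (insert e S) = kcomp ends S :=
  kcomp_congr fun a b =>
    ⟨fun hc => conn_subst hc h, fun hc => hc.mono (Finset.subset_insert _ _)⟩

lemma conn_insert_iff [DecidableEq E] {S : Finset E} {e : E}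
    (h : ¬ conn ends S (ends e).1 (ends e).2) {u v : V} :
    conn ends (insert e S) u v ↔ conn ends S u v ∨
      (conn ends S u (ends e).1 ∧ conn ends S (ends e).2 v) ∨
      (conn ends S u (ends e).2 ∧ conn ends S (ends e).1 v) := by
  set x := (ends e).1
  set y := (ends e).2
  constructor
  · intro hc
    induction hc with
    | rel a b hab =>
      obtain ⟨f, hf, hor⟩ := hab
      rcases Finset.mem_insert.1 hf with rfl | hfS
      · rcases hor with h1 | h1
        · refine Or.inr (Or.inl ⟨?_, ?_⟩)
          · rw [show a = x from congrArg Prod.fst h1.symm]; exact conn.refl _ _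
          · rw [show b = y from congrArg Prod.snd h1.symm]; exact conn.refl _ _
        · refine Or.inr (Or.inr ⟨?_, ?_⟩)
          · rw [show a = y from congrArg Prod.snd h1.symm]; exact conn.refl _ _
          · rw [show b = x from congrArg Prod.fst h1.symm]; exact conn.refl _ _
      · exact Or.inl (Relation.EqvGen.rel _ _ ⟨f, hfS, hor⟩)
    | refl a => exact Or.inl (conn.refl _ _)
    | symm a b _ ih =>
      rcases ih with h1 | ⟨h1, h2⟩ | ⟨h1, h2⟩
      · exact Or.inl h1.symm
      · exact Or.inr (Or.inr ⟨h2.symm, h1.symm⟩)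
      · exact Or.inr (Or.inl ⟨h2.symm, h1.symm⟩)
    | trans a b c _ _ ih1 ih2 =>
      rcases ih1 with h1 | ⟨h1, h2⟩ | ⟨h1, h2⟩ <;>
        rcases ih2 with h3 | ⟨h3, h4⟩ | ⟨h3, h4⟩
      · exact Or.inl (h1.trans h3)
      · exact Or.inr (Or.inl ⟨h1.trans h3, h4⟩)
      · exact Or.inr (Or.inr ⟨h1.trans h3, h4⟩)
      · exact Or.inr (Or.inl ⟨h1, h2.trans h3⟩)
      · exact absurd (h2.trans h3).symm h
      · exact Or.inl (h1.trans h4)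
      · exact Or.inr (Or.inr ⟨h1, h2.trans h3⟩)
      · exact Or.inl (h1.trans h4)
      · exact absurd (h2.trans h3) h
  · intro hc
    have hxy : conn ends (insert e S) x y := conn.single (Finset.mem_insert_self e S)
    have hmono : ∀ {a b : V}, conn ends S a b → conn ends (insert e S) a b :=
      fun h => h.mono (Finset.subset_insert _ _)
    rcases hc with h1 | ⟨h1, h2⟩ | ⟨h1, h2⟩
    · exact hmono h1
    · exact ((hmono h1).trans hxy).trans (hmono h2)
    · exact ((hmono h1).trans hxy.symm).trans (hmono h2)

lemma kcomp_insert_of_not_conn [Finite V] [DecidableEq E] {S : Finset E} {e : E}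
    (h : ¬ conn ends S (ends e).1 (ends e).2) :
    kcomp ends (insert e S) + 1 = kcomp ends S := by
  classical
  set x := (ends e).1
  set y := (ends e).2
  set sS := Relation.EqvGen.setoid (erel ends S) with hsS
  set sI := Relation.EqvGen.setoid (erel ends (insert e S)) with hsI
  letI : Fintype (Quotient sS) := Fintype.ofFinite _
  letI : Fintype (Quotient sI) := Fintype.ofFinite _
  have heq : ∀ {a b : V}, (Quotient.mk sS a = Quotient.mk sS b) ↔ conn ends S a b := by
    intro a b; exact Quotient.eq''
  have heqI : ∀ {a b : V},
      (Quotient.mk sI a = Quotient.mk sI b) ↔ conn ends (insert e S) a b := by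
    intro a b; exact Quotient.eq''
  set π : Quotient sS → Quotient sI :=
    Quotient.map' id (fun a b hab => conn.mono (Finset.subset_insert _ _) hab) with hπ
  have hπmk : ∀ a : V, π (Quotient.mk sS a) = Quotient.mk sI a := fun a => rfl
  rw [kcomp_eq, kcomp_eq, Nat.card_eq_fintype_card, Nat.card_eq_fintype_card]
  have hfib : (Finset.univ : Finset (Quotient sS)).card =
      ∑ c : Quotient sI, (Finset.univ.filter (fun a => π a = c)).card :=
    Finset.card_eq_sum_card_fiberwise (fun a _ => Finset.mem_univ _)
  have hcard : ∀ c : Quotient sI,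
      (Finset.univ.filter (fun a => π a = c)).card = if c = Quotient.mk sI x then 2 else 1 := by
    intro c
    induction c using Quotient.ind with
    | _ u =>
    by_cases hcx : Quotient.mk sI u = Quotient.mk sI x
    · rw [if_pos hcx]
      have : Finset.univ.filter (fun a => π a = Quotient.mk sI u) =
          {Quotient.mk sS x, Quotient.mk sS y} := by
        ext a
        induction a using Quotient.ind with
        | _ w =>
        simp only [Finset.mem_filter, Finset.mem_univ, true_and, Finset.mem_insert,
          Finset.mem_singleton, hπmk]
        rw [hcx, heqI, heq, heq, conn_insert_iff h]
        constructor
        · rintro (h1 | ⟨h1, h2⟩ | ⟨h1, h2⟩)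
          · exact Or.inl h1
          · exact Or.inl h1
          · exact Or.inr h1
        · rintro (h1 | h1)
          · exact Or.inl h1
          · exact Or.inr (Or.inr ⟨h1, conn.refl _ _⟩)
      rw [this]
      rw [Finset.card_insert_of_notMem, Finset.card_singleton]
      simp only [Finset.mem_singleton]
      rw [heq]
      exact h
    · rw [if_neg hcx]
      have hux : ¬ conn ends S u x := fun hc =>
        hcx (heqI.2 (hc.mono (Finset.subset_insert _ _)))
      have huy : ¬ conn ends S u y := by
        intro hc
        refine hcx (heqI.2 ?_)
        exact (hc.mono (Finset.subset_insert _ _)).trans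
          (conn.single (Finset.mem_insert_self e S)).symm
      have : Finset.univ.filter (fun a => π a = Quotient.mk sI u) = {Quotient.mk sS u} := by
        ext a
        induction a using Quotient.ind with
        | _ w =>
        simp only [Finset.mem_filter, Finset.mem_univ, true_and, Finset.mem_singleton, hπmk]
        rw [heqI, heq, conn_insert_iff h]
        constructor
        · rintro (h1 | ⟨h1, h2⟩ | ⟨h1, h2⟩)
          · exact h1
          · exact absurd h2.symm huy
          · exact absurd h2.symm hux
        · exact fun h1 => Or.inl h1
      rw [this, Finset.card_singleton]
  rw [Finset.card_univ] at hfib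
  rw [hfib]
  rw [Finset.sum_congr rfl (fun c _ => hcard c)]
  have hsplit : ∀ c : Quotient sI, (if c = Quotient.mk sI x then 2 else 1) =
      1 + (if c = Quotient.mk sI x then 1 else 0) := by
    intro c; split <;> rfl
  rw [Finset.sum_congr rfl (fun c _ => hsplit c), Finset.sum_add_distrib,
    Finset.sum_const, Finset.sum_ite_eq' Finset.univ (Quotient.mk sI x) (fun _ => 1)]
  simp [Finset.card_univ, Nat.add_comm]
  exact Fintype.card_congr' rfl

section Dep
variable [LinearOrder E]

/-- `e` is "dependent" in `A`: its endpoints are connected using edges of `A`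
smaller than `e`. -/
def dep (ends : E → V × V) (A : Finset E) (e : E) : Prop :=
  conn ends (A.filter (· < e)) (ends e).1 (ends e).2

variable [DecidableEq E]

/-- Toggle membership of `e` in `A`. -/
def tog (A : Finset E) (e : E) : Finset E := if e ∈ A then A.erase e else insert e A

lemma tog_tog (A : Finset E) (e : E) : tog (tog A e) e = A := by
  unfold tog
  by_cases h : e ∈ A
  · simp [h, Finset.insert_erase h]
  · simp [h, Finset.erase_insert h]

lemma tog_ne (A : Finset E) (e : E) : tog A e ≠ A := by
  intro hc
  by_cases h : e ∈ A
  · have : e ∉ tog A e := by simp [tog, h]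
    rw [hc] at this; exact this h
  · have : e ∈ tog A e := by simp [tog, h]
    rw [hc] at this; exact h this

lemma neg_one_pow_tog (A : Finset E) (e : E) :
    (-1 : ℝ) ^ (tog A e).card = -(-1 : ℝ) ^ A.card := by
  unfold tog
  by_cases h : e ∈ A
  · rw [if_pos h]
    have : A.card = (A.erase e).card + 1 := (Finset.card_erase_add_one h).symm
    rw [this, pow_succ]; ring
  · rw [if_neg h, Finset.card_insert_of_notMem h, pow_succ]; ring

lemma filter_lt_tog {A : Finset E} {e f : E} (hfe : f ≤ e) :
    (tog A e).filter (· < f) = A.filter (· < f) := by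
  unfold tog
  ext g
  by_cases h : e ∈ A <;> simp only [if_pos, if_neg, h, Finset.mem_filter, Finset.mem_erase,
    Finset.mem_insert, if_true, if_false]
  · constructor
    · rintro ⟨⟨_, hg⟩, hlt⟩; exact ⟨hg, hlt⟩
    · rintro ⟨hg, hlt⟩; exact ⟨⟨ne_of_lt (lt_of_lt_of_le hlt hfe), hg⟩, hlt⟩
  · constructor
    · rintro ⟨rfl | hg, hlt⟩
      · exact absurd hfe (not_le.2 hlt)
      · exact ⟨hg, hlt⟩
    · rintro ⟨hg, hlt⟩; exact ⟨Or.inr hg, hlt⟩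

lemma dep_tog_iff {A : Finset E} {e f : E} (hfe : f ≤ e) :
    dep ends (tog A e) f ↔ dep ends A f := by
  unfold dep; rw [filter_lt_tog hfe]

lemma not_dep_tog_gt {A : Finset E} {e f : E} (hef : e < f)
    (hde : dep ends A e) (hdf : ¬ dep ends A f) : ¬ dep ends (tog A e) f := by
  unfold tog
  by_cases h : e ∈ A
  · rw [if_pos h]
    intro hc
    unfold dep at hc
    exact hdf (conn.mono (Finset.filter_subset_filter _ (Finset.erase_subset _ _)) hc)
  · rw [if_neg h]
    intro hc
    unfold dep at hc
    have hfilt : (insert e A).filter (· < f) = insert e (A.filter (· < f)) := by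
      ext g
      simp only [Finset.mem_filter, Finset.mem_insert]
      constructor
      · rintro ⟨rfl | hg, hlt⟩
        · exact Or.inl rfl
        · exact Or.inr ⟨hg, hlt⟩
      · rintro (rfl | ⟨hg, hlt⟩)
        · exact ⟨Or.inl rfl, hef⟩
        · exact ⟨Or.inr hg, hlt⟩
    rw [hfilt] at hc
    have hee : conn ends (A.filter (· < f)) (ends e).1 (ends e).2 := by
      refine conn.mono ?_ hde
      intro g
      simp only [Finset.mem_filter]
      rintro ⟨hg, hlt⟩
      exact ⟨hg, hlt.trans hef⟩
    exact hdf (conn_subst hc hee)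

/-- If no edge is dependent in `A`, then `A` is a spanning forest-like set. -/
lemma kcomp_of_no_dep [Finite V] {A : Finset E} (hA : ∀ f, ¬ dep ends A f) :
    kcomp ends A + A.card = Nat.card V := by
  induction A using Finset.strongInduction with
  | _ A ih =>
  rcases Finset.eq_empty_or_nonempty A with rfl | hne
  · simp [kcomp_empty]
  · set m := A.max' hne with hm
    have hmA : m ∈ A := A.max'_mem hne
    set B := A.erase m with hB
    have hBA : B ⊂ A := Finset.erase_ssubset hmA
    have hfilt : A.filter (· < m) = B := by
      ext g
      simp only [hB, Finset.mem_filter, Finset.mem_erase]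
      exact ⟨fun ⟨hg, hlt⟩ => ⟨ne_of_lt hlt, hg⟩,
        fun ⟨hne', hg⟩ => ⟨hg, lt_of_le_of_ne (A.le_max' g hg) hne'⟩⟩
    have hnc : ¬ conn ends B (ends m).1 (ends m).2 := by
      have := hA m; unfold dep at this; rwa [hfilt] at this
    have hBdep : ∀ f, ¬ dep ends B f := by
      intro f hc
      unfold dep at hc
      exact hA f (conn.mono (Finset.filter_subset_filter _ (Finset.erase_subset _ _)) hc)
    have hrec := ih B hBA hBdep
    have hins : insert m B = A := Finset.insert_erase hmA
    have hkc : kcomp ends A + 1 = kcomp ends B := by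
      rw [← hins]; exact kcomp_insert_of_not_conn hnc
    have hcard : B.card + 1 = A.card := Finset.card_erase_add_one hmA
    omega

lemma kcomp_tog_of_dep {A : Finset E} {e : E} (hde : dep ends A e) :
    kcomp ends (tog A e) = kcomp ends A := by
  have hconn : conn ends (A.erase e) (ends e).1 (ends e).2 := by
    refine conn.mono ?_ hde
    intro g
    simp only [Finset.mem_filter, Finset.mem_erase]
    rintro ⟨hg, hlt⟩
    exact ⟨ne_of_lt hlt, hg⟩
  unfold tog
  by_cases h : e ∈ A
  · rw [if_pos h]
    have hie : insert e (A.erase e) = A := Finset.insert_erase h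
    conv_rhs => rw [← hie]
    exact (kcomp_insert_of_conn hconn).symm
  · rw [if_neg h]
    have herase : A.erase e = A := Finset.erase_eq_of_notMem h
    rw [herase] at hconn
    exact kcomp_insert_of_conn hconn

end Dep
end Aux

theorem chromPoly_neg_arg_pos' {V E : Type*} [Fintype V] [Fintype E] [LinearOrder E]
    [DecidableEq E]
    (ends : E → V × V) (hloopless : ∀ e : E, (ends e).1 ≠ (ends e).2)
    (q : ℝ) (hq : q < 0) :
    0 < (-1 : ℝ) ^ (Fintype.card V) * (aeval q (chromPoly ends) : ℝ) := by
  classical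
  set n := Fintype.card V with hn
  have hncard : Nat.card V = n := Nat.card_eq_fintype_card
  -- Step A: evaluate the polynomial
  have hval : (aeval q (chromPoly ends) : ℝ)
      = ∑ A : Finset E, (-1 : ℝ) ^ A.card * q ^ kcomp ends A := by
    unfold chromPoly
    rw [map_sum]
    refine Finset.sum_congr rfl fun A _ => ?_
    rw [map_zsmul, map_pow, aeval_X, zsmul_eq_mul]
    push_cast
    ring
  rw [hval, Finset.mul_sum]
  set F : Finset E → ℝ := fun A => (-1 : ℝ) ^ n * ((-1 : ℝ) ^ A.card * q ^ kcomp ends A)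
    with hF
  have hsplit := Finset.sum_filter_add_sum_filter_not (Finset.univ : Finset (Finset E))
    (fun A => ∀ f, ¬ dep ends A f) F
  rw [← hsplit]
  -- the non-fixed part cancels via the involution
  have hTne : ∀ A : Finset E, A ∈ Finset.univ.filter (fun A => ¬ ∀ f, ¬ dep ends A f) →
      (Finset.univ.filter (fun f => dep ends A f)).Nonempty := by
    intro A hA
    simp only [Finset.mem_filter, Finset.mem_univ, true_and, not_forall, not_not] at hA
    obtain ⟨f, hf⟩ := hA
    exact ⟨f, Finset.mem_filter.2 ⟨Finset.mem_univ _, hf⟩⟩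
  have hcancel : ∑ A ∈ Finset.univ.filter (fun A => ¬ ∀ f, ¬ dep ends A f), F A = 0 := by
    refine Finset.sum_involution
      (fun A hA => tog A ((Finset.univ.filter (fun f => dep ends A f)).max' (hTne A hA)))
      ?_ ?_ ?_ ?_
    · intro A hA
      set e := (Finset.univ.filter (fun f => dep ends A f)).max' (hTne A hA) with he
      have hdepe : dep ends A e := by
        have := Finset.max'_mem _ (hTne A hA)
        simpa using (Finset.mem_filter.1 this).2
      rw [hF]
      simp only
      rw [kcomp_tog_of_dep hdepe, neg_one_pow_tog]
      ring
    · intro A hA _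
      exact tog_ne A _
    · intro A hA
      set e := (Finset.univ.filter (fun f => dep ends A f)).max' (hTne A hA) with he
      have hdepe : dep ends A e := by
        have := Finset.max'_mem _ (hTne A hA)
        simpa using (Finset.mem_filter.1 this).2
      simp only [Finset.mem_filter, Finset.mem_univ, true_and, not_forall, not_not]
      exact ⟨e, (dep_tog_iff le_rfl).2 hdepe⟩
    · intro A hA
      set e := (Finset.univ.filter (fun f => dep ends A f)).max' (hTne A hA) with he
      have hdepe : dep ends A e := by
        have := Finset.max'_mem _ (hTne A hA)
        simpa using (Finset.mem_filter.1 this).2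
      have hmax : ∀ f, dep ends A f → f ≤ e := by
        intro f hf
        exact Finset.le_max' _ f (Finset.mem_filter.2 ⟨Finset.mem_univ _, hf⟩)
      have hmax' : ∀ f, dep ends (tog A e) f → f ≤ e := by
        intro f hf
        by_contra hlt
        push_neg at hlt
        have hnd : ¬ dep ends A f := fun hc => absurd (hmax f hc) (not_le.2 hlt)
        exact not_dep_tog_gt hlt hdepe hnd hf
      have hee : ∀ (hh : (Finset.univ.filter
          (fun f => dep ends (tog A e) f)).Nonempty),
          (Finset.univ.filter (fun f => dep ends (tog A e) f)).max' hh = e := by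
        intro hh
        apply le_antisymm
        · apply Finset.max'_le
          intro f hf
          exact hmax' f (Finset.mem_filter.1 hf).2
        · apply Finset.le_max'
          exact Finset.mem_filter.2 ⟨Finset.mem_univ _, (dep_tog_iff le_rfl).2 hdepe⟩
      rw [hee, tog_tog]
  rw [hcancel, add_zero]
  -- the fixed part is a nonempty sum of positive terms
  refine Finset.sum_pos ?_ ⟨∅, ?_⟩
  · intro A hA
    simp only [Finset.mem_filter, Finset.mem_univ, true_and] at hA
    have hk := kcomp_of_no_dep hA
    rw [hncard] at hk
    set m := kcomp ends A with hmdef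
    have hnm : n = m + A.card := by omega
    rw [hF]
    simp only
    rw [hnm]
    have h2c : (-1 : ℝ) ^ A.card * (-1 : ℝ) ^ A.card = 1 := by
      rw [← pow_add]
      exact Even.neg_one_pow ⟨A.card, rfl⟩
    have : (-1 : ℝ) ^ (m + A.card) * ((-1 : ℝ) ^ A.card * q ^ m) = (-q) ^ m := by
      rw [pow_add, neg_pow]
      linear_combination ((-1 : ℝ) ^ m * q ^ m) * h2c
    rw [this]
    exact pow_pos (by linarith) m
  · simp only [Finset.mem_filter, Finset.mem_univ, true_and]
    intro f hf
    unfold dep at hf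
    rw [Finset.filter_empty] at hf
    exact hloopless f (conn_empty hf)

/-- For any loopless finite graph with `n` vertices and any real `q < 0`,
the chromatic polynomial satisfies `(-1)^n P_G(q) > 0`. -/
theorem chromPoly_neg_arg_pos {V E : Type*} [Fintype V] [Fintype E]
    (ends : E → V × V) (hloopless : ∀ e : E, (ends e).1 ≠ (ends e).2)
    (q : ℝ) (hq : q < 0) :
    0 < (-1 : ℝ) ^ (Fintype.card V) * (aeval q (chromPoly ends) : ℝ) := by
  letI : LinearOrder E := LinearOrder.lift' (Fintype.equivFin E) (Fintype.equivFin E).injective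
  letI : DecidableEq E := Classical.decEq E
  exact chromPoly_neg_arg_pos' ends hloopless q hq
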